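/- (Pseudo-space-filling ordering of an arbitrary subset of a grid.) There is a constant C > 0 with the following property. Let h ≥ 0 be an integer, let X = {0,…,2^h − 1}² ⊆ ℤ², and let Y ⊆ X be nonempty. Then there exists a bijection b : Y → {0, 1, …, |Y| − 1} such that for every integer Δ with 1 ≤ Δ ≤ |Y| − 1, ∑_{ℓ=0}^{|Y|−1−Δ} ‖b⁻¹(ℓ) − b⁻¹(ℓ + Δ)‖₂ ≤ C · 4^h · √Δ. Equivalently, writing |Y| = ε·|X|, the sum is at most C·(√Δ/ε)·|Y|. -/

import Mathlib

open scoped BigOperators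

/-- Euclidean distance between two points of the integer lattice `ℤ²`. -/
noncomputable def eDist2 (p q : ℤ × ℤ) : ℝ :=
  Real.sqrt (((p.1 : ℝ) - (q.1 : ℝ)) ^ 2 + ((p.2 : ℝ) - (q.2 : ℝ)) ^ 2)

/-! ### Auxiliary: the Morton (Z-order) interleaving -/

def spread : ℕ → ℕ
  | 0 => 0
  | (n+1) => 4 * spread ((n+1)/2) + (n+1) % 2
decreasing_by exact Nat.div_lt_self (Nat.succ_pos n) one_lt_two

lemma spread_rec (n : ℕ) : spread n = 4 * spread (n/2) + n % 2 := by
  cases n with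
  | zero => simp [spread]
  | succ m => rw [spread]

lemma le_spread (n : ℕ) : n ≤ spread n := by
  induction n using Nat.strong_induction_on with
  | _ n ih =>
    cases n with
    | zero => simp [spread]
    | succ m =>
      rw [spread_rec]
      have h1 : (m+1)/2 < m+1 := Nat.div_lt_self (Nat.succ_pos m) one_lt_two
      have h2 := ih _ h1
      omega

lemma three_spread_lt {k n : ℕ} (h : n < 2^k) : 3 * spread n < 4^k := by
  induction k generalizing n with
  | zero => interval_cases n; simp [spread]
  | succ k ih =>
    rw [spread_rec]
    have h1 : n / 2 < 2^k := by omega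
    have h2 := ih h1
    have : (4:ℕ)^(k+1) = 4 * 4^k := by ring
    omega

def morton (x y : ℕ) : ℕ := spread x + 2 * spread y

lemma morton_decomp (x y : ℕ) :
    morton x y = 4 * morton (x/2) (y/2) + (x % 2 + 2 * (y % 2)) := by
  unfold morton
  rw [spread_rec x, spread_rec y]; ring

lemma morton_div4 (x y : ℕ) : morton x y / 4 = morton (x/2) (y/2) := by
  rw [morton_decomp]; omega

lemma morton_mod4 (x y : ℕ) : morton x y % 4 = x % 2 + 2 * (y % 2) := by
  rw [morton_decomp]; omega

lemma morton_divpow (x y k : ℕ) : morton x y / 4^k = morton (x/2^k) (y/2^k) := by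
  induction k generalizing x y with
  | zero => simp
  | succ k ih =>
    have h4 : (4:ℕ)^(k+1) = 4 * 4^k := by ring
    rw [h4, ← Nat.div_div_eq_div_mul, morton_div4, ih]
    have hx : x / 2 / 2^k = x / 2^(k+1) := by
      rw [Nat.div_div_eq_div_mul]; congr 1; ring
    have hy : y / 2 / 2^k = y / 2^(k+1) := by
      rw [Nat.div_div_eq_div_mul]; congr 1; ring
    rw [hx, hy]

lemma morton_lt {h x y : ℕ} (hx : x < 2^h) (hy : y < 2^h) : morton x y < 4^h := by
  have h1 := three_spread_lt hx
  have h2 := three_spread_lt hy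
  unfold morton
  omega

lemma morton_inj : ∀ m x y x' y', morton x y = m → morton x' y' = m → x = x' ∧ y = y' := by
  intro m
  induction m using Nat.strong_induction_on with
  | _ m ih =>
    intro x y x' y' h1 h2
    rcases Nat.eq_zero_or_pos m with hm | hm
    · subst hm
      have := le_spread x; have := le_spread y
      have := le_spread x'; have := le_spread y'
      unfold morton at h1 h2
      omega
    · have hlt : m / 4 < m := Nat.div_lt_self hm (by norm_num)
      have e1 : morton (x/2) (y/2) = m / 4 := by rw [← morton_div4, h1]
      have e2 : morton (x'/2) (y'/2) = m / 4 := by rw [← morton_div4, h2]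
      obtain ⟨hx, hy⟩ := ih _ hlt _ _ _ _ e1 e2
      have m1 : x % 2 + 2 * (y % 2) = m % 4 := by rw [← morton_mod4, h1]
      have m2 : x' % 2 + 2 * (y' % 2) = m % 4 := by rw [← morton_mod4, h2]
      omega

/-! ### Auxiliary: metric and counting lemmas -/

lemma div_close {a b E : ℕ} (hE : 0 < E) (h : a / E = b / E) : a < b + E := by
  have h1 := Nat.div_add_mod a E
  have h2 := Nat.div_add_mod b E
  have h3 : a % E < E := Nat.mod_lt _ hE
  have h4 : b % E < E := Nat.mod_lt _ hE
  set q := a / E with hq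
  rw [← h] at h2
  omega

lemma eDist2_le {p q : ℤ × ℤ} {c : ℝ} (hc : 0 ≤ c)
    (h1 : |(p.1 : ℝ) - (q.1 : ℝ)| ≤ c) (h2 : |(p.2 : ℝ) - (q.2 : ℝ)| ≤ c) :
    eDist2 p q ≤ Real.sqrt 2 * c := by
  unfold eDist2
  have e1 : ((p.1 : ℝ) - (q.1 : ℝ))^2 ≤ c^2 := sq_le_sq' (by linarith [abs_le.mp h1]) (abs_le.mp h1).2
  have e2 : ((p.2 : ℝ) - (q.2 : ℝ))^2 ≤ c^2 := sq_le_sq' (by linarith [abs_le.mp h2]) (abs_le.mp h2).2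
  calc Real.sqrt (((p.1 : ℝ) - (q.1 : ℝ)) ^ 2 + ((p.2 : ℝ) - (q.2 : ℝ)) ^ 2)
      ≤ Real.sqrt (2 * c^2) := Real.sqrt_le_sqrt (by linarith)
    _ = Real.sqrt 2 * c := by
        rw [Real.sqrt_mul (by norm_num), Real.sqrt_sq hc]

lemma count_straddle (f : ℕ → ℕ) (N Δ : ℕ)
    (hf : ∀ i j, i < j → j < N → f i < f j) (t : ℕ) :
    (((Finset.range (N - Δ)).filter (fun ℓ => f ℓ < t ∧ t ≤ f (ℓ+Δ))).card) ≤ Δ := by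
  set S := (Finset.range (N - Δ)).filter (fun ℓ => f ℓ < t ∧ t ≤ f (ℓ+Δ)) with hS
  rcases S.eq_empty_or_nonempty with he | hne
  · simp [he]
  · have hmem : ∀ ℓ ∈ S, ℓ < N - Δ ∧ f ℓ < t ∧ t ≤ f (ℓ+Δ) := by
      intro ℓ hℓ
      simp only [hS, Finset.mem_filter, Finset.mem_range] at hℓ
      exact ⟨hℓ.1, hℓ.2⟩
    set ℓ0 := S.min' hne with hℓ0
    have hsub : S ⊆ Finset.Ico ℓ0 (ℓ0 + Δ) := by
      intro ℓ hℓ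
      rw [Finset.mem_Ico]
      refine ⟨S.min'_le ℓ hℓ, ?_⟩
      by_contra hcon
      push_neg at hcon
      obtain ⟨hℓr, hℓ1, hℓ2⟩ := hmem ℓ hℓ
      obtain ⟨h0r, h01, h02⟩ := hmem ℓ0 (S.min'_mem hne)
      have : f (ℓ0 + Δ) ≤ f ℓ := by
        rcases Nat.lt_or_ge (ℓ0 + Δ) ℓ with h | h
        · exact le_of_lt (hf _ _ h (by omega))
        · have : ℓ0 + Δ = ℓ := by omega
          rw [this]
      omega
    calc S.card ≤ (Finset.Ico ℓ0 (ℓ0 + Δ)).card := Finset.card_le_card hsub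
      _ = Δ := by rw [Nat.card_Ico]; omega

lemma geom_tail (m0 h : ℕ) : ∑ m ∈ Finset.Icc m0 h, ((1:ℝ)/2)^m ≤ 2 * (1/2)^m0 := by
  rcases le_or_gt m0 h with hmh | hmh
  · have : Finset.Icc m0 h = Finset.map (addLeftEmbedding m0) (Finset.range (h + 1 - m0)) := by
      ext x
      simp only [Finset.mem_Icc, Finset.mem_map, Finset.mem_range, addLeftEmbedding_apply]
      constructor
      · rintro ⟨h1, h2⟩; exact ⟨x - m0, by omega, by omega⟩
      · rintro ⟨i, hi, rfl⟩; omega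
    rw [this, Finset.sum_map]
    simp only [addLeftEmbedding_apply]
    have h2 : ∀ i, ((1:ℝ)/2)^(m0 + i) = (1/2)^m0 * (1/2)^i := fun i => pow_add _ _ _
    rw [Finset.sum_congr rfl (fun i _ => h2 i), ← Finset.mul_sum]
    have := sum_geometric_two_le (h + 1 - m0)
    have hp : (0:ℝ) ≤ (1/2)^m0 := by positivity
    nlinarith
  · rw [Finset.Icc_eq_empty (by omega)]
    simp only [Finset.sum_empty]
    positivity

lemma div_stab {a b m m' : ℕ} (hmm : m ≤ m') (h : a/4^m = b/4^m) : a/4^m' = b/4^m' := by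
  have he : (4:ℕ)^m' = 4^m * 4^(m'-m) := by rw [← pow_add]; congr 1; omega
  rw [he, ← Nat.div_div_eq_div_mul, ← Nat.div_div_eq_div_mul, h]

lemma pointwise_bound (h m0 a b : ℕ) (hm0 : m0 ≤ h) (hab : a < b) (hb : b < 4^h)
    (d : ℝ) (hd : ∀ k, a/4^k = b/4^k → d ≤ Real.sqrt 2 * 2^k) :
    d ≤ Real.sqrt 2 * 2^m0
        + ∑ m ∈ Finset.Icc m0 h,
            Real.sqrt 2 * 2^(m+1) * (if a/4^m = b/4^m then 0 else 1) := by
  have hterm : ∀ m, (0:ℝ) ≤ Real.sqrt 2 * 2^(m+1) * (if a/4^m = b/4^m then 0 else 1) := by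
    intro m
    have : (0:ℝ) ≤ (if a/4^m = b/4^m then (0:ℝ) else 1) := by positivity
    positivity
  by_cases h0 : a/4^m0 = b/4^m0
  · have h1 := hd m0 h0
    have h2 : (0:ℝ) ≤ ∑ m ∈ Finset.Icc m0 h,
        Real.sqrt 2 * 2^(m+1) * (if a/4^m = b/4^m then 0 else 1) :=
      Finset.sum_nonneg (fun m _ => hterm m)
    linarith
  · set P : ℕ → Prop := fun m => ¬ (a/4^m = b/4^m) with hP
    have hdec : DecidablePred P := fun m => instDecidableNot
    set M := Nat.findGreatest P h with hM
    have hPM : P M := Nat.findGreatest_spec hm0 h0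
    have hm0M : m0 ≤ M := Nat.le_findGreatest hm0 h0
    have hMh : M ≤ h := Nat.findGreatest_le h
    have hPh : ¬ P h := by
      simp only [hP, not_not]
      rw [Nat.div_eq_of_lt (lt_trans hab hb), Nat.div_eq_of_lt hb]
    have hMlt : M < h := lt_of_le_of_ne hMh (fun he => hPh (he ▸ hPM))
    have hnot : ¬ P (M+1) := by
      intro hp
      have := Nat.le_findGreatest (by omega : M + 1 ≤ h) hp
      omega
    have heq : a/4^(M+1) = b/4^(M+1) := not_not.mp hnot
    have hdle : d ≤ Real.sqrt 2 * 2^(M+1) := hd _ heq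
    have hind : ∀ m ∈ Finset.Icc m0 M,
        Real.sqrt 2 * 2^(m+1) * (if a/4^m = b/4^m then 0 else 1)
          = Real.sqrt 2 * 2^(m+1) := by
      intro m hm
      rw [Finset.mem_Icc] at hm
      have : ¬ (a/4^m = b/4^m) := fun hcon => hPM (div_stab hm.2 hcon)
      rw [if_neg this, mul_one]
    have hsingle : Real.sqrt 2 * 2^(M+1) ≤ ∑ m ∈ Finset.Icc m0 M, Real.sqrt 2 * 2^(m+1) := by
      apply Finset.single_le_sum (f := fun m => Real.sqrt 2 * (2:ℝ)^(m+1))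
      · intro i _; positivity
      · rw [Finset.mem_Icc]; omega
    have hsub : ∑ m ∈ Finset.Icc m0 M,
        Real.sqrt 2 * 2^(m+1) * (if a/4^m = b/4^m then 0 else 1)
        ≤ ∑ m ∈ Finset.Icc m0 h,
        Real.sqrt 2 * 2^(m+1) * (if a/4^m = b/4^m then 0 else 1) := by
      apply Finset.sum_le_sum_of_subset_of_nonneg
      · exact Finset.Icc_subset_Icc_right hMh
      · intro i _ _; exact hterm i
    rw [Finset.sum_congr rfl hind] at hsub
    have hs2 : (0:ℝ) ≤ Real.sqrt 2 * 2^m0 := by positivity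
    linarith

/-! ### Main theorem -/

theorem pseudo_space_filling_curve :
    ∃ C : ℝ, 0 < C ∧
    ∀ (h : ℕ) (Y : Finset (ℤ × ℤ)),
      (∀ y ∈ Y, 0 ≤ y.1 ∧ y.1 < 2 ^ h ∧ 0 ≤ y.2 ∧ y.2 < 2 ^ h) →
      Y.Nonempty →
      ∃ g : ℕ → ℤ × ℤ,
        (∀ ℓ < Y.card, g ℓ ∈ Y) ∧
        (∀ y ∈ Y, ∃ ℓ < Y.card, g ℓ = y) ∧
        Set.InjOn g (Set.Iio Y.card) ∧
        (∀ Δ : ℕ, 1 ≤ Δ → Δ ≤ Y.card - 1 →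
          ∑ ℓ ∈ Finset.range (Y.card - Δ), eDist2 (g ℓ) (g (ℓ + Δ)) ≤
            C * (4 : ℝ) ^ h * Real.sqrt Δ) := by
  refine ⟨9, by norm_num, ?_⟩
  intro h Y hY hne
  classical
  set key : ℤ × ℤ → ℕ := fun p => morton p.1.toNat p.2.toNat with hkey
  -- basic facts about points in Y
  have hYx : ∀ y ∈ Y, y.1.toNat < 2^h ∧ y.2.toNat < 2^h := by
    intro y hy
    obtain ⟨h1, h2, h3, h4⟩ := hY y hy
    have e : ((2^h : ℕ) : ℤ) = 2^h := by push_cast; ring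
    omega
  have hkeylt : ∀ y ∈ Y, key y < 4^h := by
    intro y hy
    obtain ⟨hx, hy2⟩ := hYx y hy
    exact morton_lt hx hy2
  have hkeyinj : ∀ p ∈ Y, ∀ q ∈ Y, key p = key q → p = q := by
    intro p hp q hq hpq
    obtain ⟨hp1, _, hp3, _⟩ := hY p hp
    obtain ⟨hq1, _, hq3, _⟩ := hY q hq
    obtain ⟨e1, e2⟩ := morton_inj (key q) _ _ _ _ hpq rfl
    have : p.1 = q.1 := by omega
    have : p.2 = q.2 := by omega
    exact Prod.ext (by omega) (by omega)
  -- build the sorted list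
  set le : ℤ × ℤ → ℤ × ℤ → Bool := fun a b => decide (key a ≤ key b) with hle
  set l : List (ℤ × ℤ) := Y.toList.mergeSort le with hl
  have hperm : l.Perm Y.toList := List.mergeSort_perm Y.toList le
  have hlen : l.length = Y.card := by rw [hperm.length_eq, Finset.length_toList]
  have hnodup : l.Nodup := hperm.nodup_iff.mpr (Finset.nodup_toList Y)
  have hmeml : ∀ a, a ∈ l ↔ a ∈ Y := by
    intro a
    rw [hperm.mem_iff, Finset.mem_toList]
  have hpair : l.Pairwise (fun a b => le a b = true) := by
    apply List.pairwise_mergeSort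
    · intro a b c hab hbc
      simp only [hle, decide_eq_true_eq] at *
      omega
    · intro a b
      simp only [hle, Bool.or_eq_true, decide_eq_true_eq]
      omega
  rw [List.pairwise_iff_get] at hpair
  set g : ℕ → ℤ × ℤ := fun ℓ => l.getD ℓ (0, 0) with hg
  have hgget : ∀ ℓ (hℓ : ℓ < l.length), g ℓ = l.get ⟨ℓ, hℓ⟩ := by
    intro ℓ hℓ
    simp only [hg]
    exact List.getD_eq_get l (0,0) ⟨ℓ, hℓ⟩
  have hgY : ∀ ℓ < Y.card, g ℓ ∈ Y := by
    intro ℓ hℓ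
    have hℓ' : ℓ < l.length := by omega
    rw [hgget ℓ hℓ', ← hmeml]
    exact List.get_mem l ⟨ℓ, hℓ'⟩
  have hfmono : ∀ i j, i < j → j < Y.card → key (g i) < key (g j) := by
    intro i j hij hj
    have hjl : j < l.length := by omega
    have hil : i < l.length := by omega
    have h1 := hpair ⟨i, hil⟩ ⟨j, hjl⟩ (by exact hij)
    simp only [hle, decide_eq_true_eq] at h1
    rw [hgget i hil, hgget j hjl]
    refine lt_of_le_of_ne h1 ?_
    intro hcon
    have hmem1 : l.get ⟨i, hil⟩ ∈ Y := (hmeml _).mp (List.get_mem l ⟨i, hil⟩)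
    have hmem2 : l.get ⟨j, hjl⟩ ∈ Y := (hmeml _).mp (List.get_mem l ⟨j, hjl⟩)
    have := hkeyinj _ hmem1 _ hmem2 hcon
    have := (hnodup.get_inj_iff).mp this
    simp only [Fin.mk.injEq] at this
    omega
  refine ⟨g, hgY, ?_, ?_, ?_⟩
  · -- surjectivity
    intro y hy
    obtain ⟨⟨i, hi⟩, hget⟩ := List.mem_iff_get.mp ((hmeml y).mpr hy)
    exact ⟨i, by omega, by rw [hgget i hi]; exact hget⟩
  · -- injectivity
    intro i hi j hj hij
    simp only [Set.mem_Iio] at hi hj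
    have hil : i < l.length := by omega
    have hjl : j < l.length := by omega
    rw [hgget i hil, hgget j hjl] at hij
    have := (hnodup.get_inj_iff).mp hij
    simpa using this
  · -- the main estimate
    intro Δ hΔ1 hΔN
    set N := Y.card with hN
    have hN1 : 1 ≤ N := Finset.card_pos.mpr hne
    have hΔltN : Δ < N := by omega
    set f : ℕ → ℕ := fun ℓ => key (g ℓ) with hf
    have hcard : N ≤ 4^h := by
      have : ∀ y ∈ Y, key y ∈ Finset.range (4^h) := by
        intro y hy; rw [Finset.mem_range]; exact hkeylt y hy
      have := Finset.card_le_card_of_injOn key this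
        (fun p hp q hq => hkeyinj p hp q hq)
      simpa using this
    -- choice of m0
    have hex : ∃ m, Δ ≤ 4^m := ⟨h, by omega⟩
    obtain ⟨m0, hm0spec, hm0min⟩ : ∃ m, Δ ≤ 4^m ∧ ∀ k, k < m → ¬ Δ ≤ 4^k :=
      ⟨Nat.find hex, Nat.find_spec hex, fun k hk => Nat.find_min hex hk⟩
    clear hex
    have hm0h : m0 ≤ h := by
      by_contra hcon
      push_neg at hcon
      exact hm0min h hcon (by omega)
    set s := Real.sqrt Δ with hs
    have hs1 : 1 ≤ s := Real.one_le_sqrt.mpr (by exact_mod_cast hΔ1)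
    have hs0 : 0 ≤ s := by linarith
    have h2m0 : (2:ℝ)^m0 ≤ 2 * s := by
      rcases Nat.eq_zero_or_pos m0 with h0 | h0
      · rw [h0]; simpa using by linarith
      · have hlt : ¬ (Δ ≤ 4^(m0-1)) := hm0min (m0-1) (by omega)
        push_neg at hlt
        have hcast : ((4:ℕ)^(m0-1) : ℝ) < (Δ : ℝ) := by exact_mod_cast hlt
        have h4 : ((4:ℕ)^(m0-1) : ℝ) = ((2:ℝ)^(m0-1))^2 := by
          push_cast
          rw [show (4:ℝ) = 2*2 by norm_num, mul_pow, sq]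
        have hlt2 : (2:ℝ)^(m0-1) < s := by
          rw [hs]
          rw [Real.lt_sqrt (by positivity)]
          rw [← h4]; exact hcast
        have : (2:ℝ)^m0 = 2 * 2^(m0-1) := by
          rw [← pow_succ']
          congr 1
          omega
        linarith
    have hΔle : (Δ:ℝ) ≤ s * 2^m0 := by
      have h1 : s ≤ (2:ℝ)^m0 := by
        have : (Δ:ℝ) ≤ ((2:ℝ)^m0)^2 := by
          have : ((4:ℕ)^m0 : ℝ) = ((2:ℝ)^m0)^2 := by
            push_cast
            rw [show (4:ℝ) = 2*2 by norm_num, mul_pow, sq]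
          rw [← this]
          exact_mod_cast hm0spec
        calc s ≤ Real.sqrt (((2:ℝ)^m0)^2) := Real.sqrt_le_sqrt this
          _ = (2:ℝ)^m0 := Real.sqrt_sq (by positivity)
      calc (Δ:ℝ) = s * s := (Real.mul_self_sqrt (by positivity)).symm
        _ ≤ s * 2^m0 := by nlinarith
    -- pointwise bound
    have hab : ∀ ℓ ∈ Finset.range (N - Δ), f ℓ < f (ℓ + Δ) :=
      fun ℓ hℓ => hfmono ℓ (ℓ + Δ) (by omega) (by
        rw [Finset.mem_range] at hℓ; omega)
    have hblt : ∀ ℓ ∈ Finset.range (N - Δ), f (ℓ + Δ) < 4^h := by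
      intro ℓ hℓ
      rw [Finset.mem_range] at hℓ
      exact hkeylt _ (hgY _ (by omega))
    have hpt : ∀ ℓ ∈ Finset.range (N - Δ),
        eDist2 (g ℓ) (g (ℓ + Δ)) ≤ Real.sqrt 2 * 2^m0
          + ∑ m ∈ Finset.Icc m0 h,
              Real.sqrt 2 * 2^(m+1) * (if f ℓ/4^m = f (ℓ+Δ)/4^m then 0 else 1) := by
      intro ℓ hℓ
      apply pointwise_bound h m0 (f ℓ) (f (ℓ+Δ)) hm0h (hab ℓ hℓ) (hblt ℓ hℓ)
      intro k hk
      -- block lemma: same dyadic block ⇒ coordinates within 2^k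
      rw [Finset.mem_range] at hℓ
      have hp : g ℓ ∈ Y := hgY _ (by omega)
      have hq : g (ℓ+Δ) ∈ Y := hgY _ (by omega)
      set p := g ℓ
      set q := g (ℓ+Δ)
      have hk1 : morton (p.1.toNat/2^k) (p.2.toNat/2^k)
          = morton (q.1.toNat/2^k) (q.2.toNat/2^k) := by
        rw [← morton_divpow, ← morton_divpow]
        exact hk
      obtain ⟨ex, ey⟩ := morton_inj _ _ _ _ _ hk1 rfl
      have hE : (0:ℕ) < 2^k := Nat.pow_pos (n := k) (by norm_num)
      have c1 := div_close hE ex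
      have c2 := div_close hE ex.symm
      have c3 := div_close hE ey
      have c4 := div_close hE ey.symm
      obtain ⟨hp1, _, hp3, _⟩ := hY p hp
      obtain ⟨hq1, _, hq3, _⟩ := hY q hq
      apply eDist2_le (by positivity)
      · rw [abs_le]
        have e1 : ((p.1.toNat : ℝ)) = (p.1 : ℝ) := by exact_mod_cast congrArg Int.cast (Int.toNat_of_nonneg hp1)
        have e2 : ((q.1.toNat : ℝ)) = (q.1 : ℝ) := by exact_mod_cast congrArg Int.cast (Int.toNat_of_nonneg hq1)
        have c1' : (p.1.toNat : ℝ) < (q.1.toNat : ℝ) + ((2:ℝ))^k := by exact_mod_cast c1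
        have c2' : (q.1.toNat : ℝ) < (p.1.toNat : ℝ) + ((2:ℝ))^k := by exact_mod_cast c2
        rw [e1, e2] at c1' c2'
        constructor <;> linarith
      · rw [abs_le]
        have e1 : ((p.2.toNat : ℝ)) = (p.2 : ℝ) := by exact_mod_cast congrArg Int.cast (Int.toNat_of_nonneg hp3)
        have e2 : ((q.2.toNat : ℝ)) = (q.2 : ℝ) := by exact_mod_cast congrArg Int.cast (Int.toNat_of_nonneg hq3)
        have c3' : (p.2.toNat : ℝ) < (q.2.toNat : ℝ) + ((2:ℝ))^k := by exact_mod_cast c3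
        have c4' : (q.2.toNat : ℝ) < (p.2.toNat : ℝ) + ((2:ℝ))^k := by exact_mod_cast c4
        rw [e1, e2] at c3' c4'
        constructor <;> linarith
    -- counting
    set T : ℕ → ℕ := fun m =>
      ((Finset.range (N - Δ)).filter (fun ℓ => ¬ (f ℓ/4^m = f (ℓ+Δ)/4^m))).card with hT
    have hTle : ∀ m, m ≤ h → T m ≤ 4^(h-m) * Δ := by
      intro m hm
      have h4m : (0:ℕ) < 4^m := Nat.pow_pos (n := m) (by norm_num)
      have hsub : (Finset.range (N - Δ)).filter (fun ℓ => ¬ (f ℓ/4^m = f (ℓ+Δ)/4^m))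
          ⊆ (Finset.Ico 1 (4^(h-m))).biUnion
            (fun t => (Finset.range (N-Δ)).filter (fun ℓ => f ℓ < t * 4^m ∧ t * 4^m ≤ f (ℓ+Δ))) := by
        intro ℓ hℓ
        simp only [Finset.mem_filter, Finset.mem_range] at hℓ
        obtain ⟨hℓr, hℓc⟩ := hℓ
        have hfab : f ℓ < f (ℓ+Δ) := hab ℓ (Finset.mem_range.mpr hℓr)
        have hdivle : f ℓ / 4^m ≤ f (ℓ+Δ) / 4^m := Nat.div_le_div_right (le_of_lt hfab)
        have hdivlt : f ℓ / 4^m < f (ℓ+Δ) / 4^m := lt_of_le_of_ne hdivle hℓc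
        rw [Finset.mem_biUnion]
        refine ⟨f (ℓ+Δ) / 4^m, ?_, ?_⟩
        · rw [Finset.mem_Ico]
          constructor
          · exact Nat.lt_of_le_of_lt (Nat.zero_le _) hdivlt
          · have hb : f (ℓ+Δ) < 4^h := hblt ℓ (Finset.mem_range.mpr hℓr)
            have hmul : (f (ℓ+Δ) / 4^m) * 4^m ≤ f (ℓ+Δ) := Nat.div_mul_le_self _ _
            have h4 : (4:ℕ)^h = 4^(h-m) * 4^m := by rw [← pow_add]; congr 1; omega
            rw [h4] at hb
            exact Nat.lt_of_mul_lt_mul_right (lt_of_le_of_lt hmul hb)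
        · rw [Finset.mem_filter, Finset.mem_range]
          refine ⟨hℓr, ?_, Nat.div_mul_le_self _ _⟩
          rw [← Nat.div_lt_iff_lt_mul h4m]
          exact hdivlt
      calc T m ≤ ((Finset.Ico 1 (4^(h-m))).biUnion
            (fun t => (Finset.range (N-Δ)).filter (fun ℓ => f ℓ < t * 4^m ∧ t * 4^m ≤ f (ℓ+Δ)))).card :=
            Finset.card_le_card hsub
        _ ≤ ∑ t ∈ Finset.Ico 1 (4^(h-m)), ((Finset.range (N-Δ)).filter
              (fun ℓ => f ℓ < t * 4^m ∧ t * 4^m ≤ f (ℓ+Δ))).card := Finset.card_biUnion_le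
        _ ≤ ∑ _t ∈ Finset.Ico 1 (4^(h-m)), Δ := by
            apply Finset.sum_le_sum
            intro t _
            exact count_straddle f N Δ hfmono (t * 4^m)
        _ ≤ 4^(h-m) * Δ := by
            rw [Finset.sum_const, Nat.card_Ico, smul_eq_mul]
            exact Nat.mul_le_mul_right Δ (Nat.sub_le _ _)
    -- assemble
    have step1 : ∑ ℓ ∈ Finset.range (N - Δ), eDist2 (g ℓ) (g (ℓ + Δ))
        ≤ ∑ ℓ ∈ Finset.range (N - Δ), (Real.sqrt 2 * 2^m0
          + ∑ m ∈ Finset.Icc m0 h,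
              Real.sqrt 2 * 2^(m+1) * (if f ℓ/4^m = f (ℓ+Δ)/4^m then 0 else 1)) :=
      Finset.sum_le_sum hpt
    have step2 : ∑ ℓ ∈ Finset.range (N - Δ), (Real.sqrt 2 * 2^m0
          + ∑ m ∈ Finset.Icc m0 h,
              Real.sqrt 2 * 2^(m+1) * (if f ℓ/4^m = f (ℓ+Δ)/4^m then 0 else 1))
        = (N - Δ : ℕ) * (Real.sqrt 2 * 2^m0)
          + ∑ m ∈ Finset.Icc m0 h, Real.sqrt 2 * 2^(m+1) * (T m : ℝ) := by
      rw [Finset.sum_add_distrib, Finset.sum_const, Finset.card_range, nsmul_eq_mul]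
      congr 1
      rw [Finset.sum_comm]
      apply Finset.sum_congr rfl
      intro m _
      rw [← Finset.mul_sum]
      congr 1
      have hsw : ∀ ℓ, (if f ℓ/4^m = f (ℓ+Δ)/4^m then (0:ℝ) else 1)
          = (if ¬ (f ℓ/4^m = f (ℓ+Δ)/4^m) then (1:ℝ) else 0) := by
        intro ℓ
        by_cases hc : f ℓ/4^m = f (ℓ+Δ)/4^m <;> simp [hc]
      rw [Finset.sum_congr rfl (fun ℓ _ => hsw ℓ), Finset.sum_boole]
    have hP4 : ((N - Δ : ℕ) : ℝ) ≤ (4:ℝ)^h := by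
      have : (N - Δ : ℕ) ≤ 4^h := by omega
      calc ((N - Δ : ℕ) : ℝ) ≤ ((4^h : ℕ) : ℝ) := by exact_mod_cast this
        _ = (4:ℝ)^h := by push_cast; ring
    have step3 : ∑ m ∈ Finset.Icc m0 h, Real.sqrt 2 * 2^(m+1) * (T m : ℝ)
        ≤ ∑ m ∈ Finset.Icc m0 h, Real.sqrt 2 * (Δ:ℝ) * (2 * (4:ℝ)^h) * ((1:ℝ)/2)^m := by
      apply Finset.sum_le_sum
      intro m hm
      rw [Finset.mem_Icc] at hm
      have hTm : (T m : ℝ) ≤ ((4^(h-m) * Δ : ℕ) : ℝ) := by exact_mod_cast hTle m hm.2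
      have h4m : (0:ℝ) < (4:ℝ)^m := by positivity
      have e1 : (4:ℝ)^(h-m) * 4^m = 4^h := by
        rw [← pow_add]; congr 1; omega
      have e2 : ((4^(h-m) * Δ : ℕ) : ℝ) = (4:ℝ)^(h-m) * (Δ:ℝ) := by push_cast; ring
      have key2 : Real.sqrt 2 * 2^(m+1) * ((4:ℝ)^(h-m) * (Δ:ℝ))
          = Real.sqrt 2 * (Δ:ℝ) * (2 * (4:ℝ)^h) * ((1:ℝ)/2)^m := by
        have e3 : ((1:ℝ)/2)^m * 4^m = 2^m := by
          rw [← mul_pow]; norm_num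
        have e4 : (2:ℝ)^(m+1) = 2 * 2^m := by rw [pow_succ]; ring
        apply mul_right_cancel₀ (ne_of_gt h4m)
        calc Real.sqrt 2 * 2^(m+1) * ((4:ℝ)^(h-m) * (Δ:ℝ)) * 4^m
            = Real.sqrt 2 * 2^(m+1) * (Δ:ℝ) * ((4:ℝ)^(h-m) * 4^m) := by ring
          _ = Real.sqrt 2 * 2^(m+1) * (Δ:ℝ) * 4^h := by rw [e1]
          _ = Real.sqrt 2 * (Δ:ℝ) * (2 * (4:ℝ)^h) * (((1:ℝ)/2)^m * 4^m) := by
              rw [e3, e4]; ring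
          _ = Real.sqrt 2 * (Δ:ℝ) * (2 * (4:ℝ)^h) * ((1:ℝ)/2)^m * 4^m := by ring
      calc Real.sqrt 2 * 2^(m+1) * (T m : ℝ)
          ≤ Real.sqrt 2 * 2^(m+1) * ((4:ℝ)^(h-m) * (Δ:ℝ)) := by
            rw [e2] at hTm
            exact mul_le_mul_of_nonneg_left hTm (by positivity)
        _ = Real.sqrt 2 * (Δ:ℝ) * (2 * (4:ℝ)^h) * ((1:ℝ)/2)^m := key2
    have step4 : ∑ m ∈ Finset.Icc m0 h, Real.sqrt 2 * (Δ:ℝ) * (2 * (4:ℝ)^h) * ((1:ℝ)/2)^m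
        ≤ Real.sqrt 2 * (Δ:ℝ) * (2 * (4:ℝ)^h) * (2 * ((1:ℝ)/2)^m0) := by
      rw [← Finset.mul_sum]
      have hc : (0:ℝ) ≤ Real.sqrt 2 * (Δ:ℝ) * (2 * (4:ℝ)^h) := by positivity
      exact mul_le_mul_of_nonneg_left (geom_tail m0 h) hc
    -- final numeric assembly
    have hsqrt2 : Real.sqrt 2 ≤ 3/2 := by
      nlinarith [Real.sq_sqrt (by norm_num : (0:ℝ) ≤ 2), Real.sqrt_nonneg 2]
    have hsqrt2nn : 0 ≤ Real.sqrt 2 := Real.sqrt_nonneg 2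
    have h4h : (0:ℝ) < (4:ℝ)^h := by positivity
    have hB : Real.sqrt 2 * 2^m0 ≤ 3 * s := by
      calc Real.sqrt 2 * 2^m0 ≤ (3/2) * (2*s) :=
            mul_le_mul hsqrt2 h2m0 (by positivity) (by norm_num)
        _ = 3 * s := by ring
    have hfirst : ((N - Δ : ℕ) : ℝ) * (Real.sqrt 2 * 2^m0) ≤ 3 * ((4:ℝ)^h * s) := by
      calc ((N - Δ : ℕ) : ℝ) * (Real.sqrt 2 * 2^m0) ≤ (4:ℝ)^h * (3*s) :=
            mul_le_mul hP4 hB (by positivity) (le_of_lt h4h)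
        _ = 3 * ((4:ℝ)^h * s) := by ring
    have hsecond : Real.sqrt 2 * (Δ:ℝ) * (2 * (4:ℝ)^h) * (2 * ((1:ℝ)/2)^m0)
        ≤ 6 * ((4:ℝ)^h * s) := by
      have hhalf : (0:ℝ) < ((1:ℝ)/2)^m0 := by positivity
      have hΔ2 : (Δ:ℝ) * ((1:ℝ)/2)^m0 ≤ s := by
        have e : ((1:ℝ)/2)^m0 * (2:ℝ)^m0 = 1 := by
          rw [← mul_pow]; norm_num
        calc (Δ:ℝ) * ((1:ℝ)/2)^m0 ≤ (s * 2^m0) * ((1:ℝ)/2)^m0 :=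
              mul_le_mul_of_nonneg_right hΔle (le_of_lt hhalf)
          _ = s * (((1:ℝ)/2)^m0 * (2:ℝ)^m0) := by ring
          _ = s := by rw [e, mul_one]
      calc Real.sqrt 2 * (Δ:ℝ) * (2 * (4:ℝ)^h) * (2 * ((1:ℝ)/2)^m0)
          = (4 * (4:ℝ)^h * Real.sqrt 2) * ((Δ:ℝ) * ((1:ℝ)/2)^m0) := by ring
        _ ≤ (4 * (4:ℝ)^h * Real.sqrt 2) * s :=
            mul_le_mul_of_nonneg_left hΔ2 (by positivity)
        _ = (4 * (4:ℝ)^h * s) * Real.sqrt 2 := by ring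
        _ ≤ (4 * (4:ℝ)^h * s) * (3/2) :=
            mul_le_mul_of_nonneg_left hsqrt2 (by positivity)
        _ = 6 * ((4:ℝ)^h * s) := by ring
    calc ∑ ℓ ∈ Finset.range (N - Δ), eDist2 (g ℓ) (g (ℓ + Δ))
        ≤ (N - Δ : ℕ) * (Real.sqrt 2 * 2^m0)
          + ∑ m ∈ Finset.Icc m0 h, Real.sqrt 2 * 2^(m+1) * (T m : ℝ) := by
          rw [← step2]; exact step1
      _ ≤ (N - Δ : ℕ) * (Real.sqrt 2 * 2^m0)
          + Real.sqrt 2 * (Δ:ℝ) * (2 * (4:ℝ)^h) * (2 * ((1:ℝ)/2)^m0) := by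
          have := le_trans step3 step4
          linarith
      _ ≤ 3 * ((4:ℝ)^h * s) + 6 * ((4:ℝ)^h * s) := by linarith
      _ = 9 * (4:ℝ)^h * s := by ring
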